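/- Let n ≥ 1 and let T be the n×n real tridiagonal matrix with diagonal entries a₁,…,aₙ, superdiagonal entries b₁,…,b_{n−1} (in positions (i,i+1)), subdiagonal entries c₁,…,c_{n−1} (in positions (i+1,i)), and all other entries zero. If bᵢ·cᵢ > 0 for every i = 1,…,n−1, then every eigenvalue of T (as a root of its characteristic polynomial over ℂ) is real and has algebraic multiplicity one; that is, T has n distinct real eigenvalues. -/

import Mathlib

open Polynomial

/-- Charpoly is invariant under conjugation. -/
private lemma my_charpoly_conj {m R : Type*} [Fintype m] [DecidableEq m] [CommRing R]
    (P Q A : Matrix m m R) (hPQ : P * Q = 1) :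
    (P * A * Q).charpoly = A.charpoly := by
  have hmap : (P.map C) * (Q.map C) = (1 : Matrix m m R[X]) := by
    rw [← Matrix.map_mul, hPQ, Matrix.map_one _ (map_zero C) (map_one C)]
  have hcomm : ∀ M : Matrix m m R[X], M * Matrix.scalar m (X : R[X]) =
      Matrix.scalar m (X : R[X]) * M := by
    intro M; ext i j
    simp [Matrix.scalar_apply, Matrix.mul_diagonal, Matrix.diagonal_mul, mul_comm]
  have key : Matrix.charmatrix (P * A * Q) = P.map C * Matrix.charmatrix A * Q.map C := by
    rw [Matrix.charmatrix, Matrix.charmatrix]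
    simp only [RingHom.mapMatrix_apply]
    rw [Matrix.map_mul, Matrix.map_mul, Matrix.mul_sub, Matrix.sub_mul]
    congr 1
    rw [hcomm (P.map C), Matrix.mul_assoc, hmap, Matrix.mul_one]
  rw [Matrix.charpoly, Matrix.charpoly, key, Matrix.det_mul, Matrix.det_mul]
  have : (P.map C).det * (Q.map C).det = 1 := by
    rw [← Matrix.det_mul, hmap, Matrix.det_one]
  calc (P.map C).det * (Matrix.charmatrix A).det * (Q.map C).det
      = (Matrix.charmatrix A).det * ((P.map C).det * (Q.map C).det) := by ring
    _ = (Matrix.charmatrix A).det := by rw [this, mul_one]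

private lemma my_charpoly_diagonal {m R : Type*} [Fintype m] [DecidableEq m] [CommRing R]
    (v : m → R) : (Matrix.diagonal v).charpoly = ∏ i, (X - C (v i)) := by
  have : Matrix.charmatrix (Matrix.diagonal v) = Matrix.diagonal (fun i => X - C (v i)) := by
    ext i j
    by_cases h : i = j
    · subst h; simp
    · simp [Matrix.charmatrix_apply_ne _ _ _ h, Matrix.diagonal_apply_ne _ h,
        Matrix.diagonal_apply_ne' _ h]
  rw [Matrix.charpoly, this, Matrix.det_diagonal]

/-- An eigenvector of a tridiagonal matrix with nonzero superdiagonal entries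
vanishes if its first coordinate vanishes. -/
private lemma tridiag_eigvec_unique {n : ℕ} (M : Matrix (Fin n) (Fin n) ℝ)
    (htri : ∀ i j : Fin n, 1 < ((i : ℤ) - (j : ℤ)).natAbs → M i j = 0)
    (hsup : ∀ (k : ℕ) (h : k + 1 < n),
      M ⟨k, Nat.lt_of_succ_lt h⟩ ⟨k + 1, h⟩ ≠ 0)
    (μ : ℝ) (w : Fin n → ℝ) (hw : Matrix.mulVec M w = μ • w)
    (h0 : ∀ (h : 0 < n), w ⟨0, h⟩ = 0) : w = 0 := by
  have key : ∀ k, ∀ (hk : k < n), w ⟨k, hk⟩ = 0 := by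
    intro k
    induction k using Nat.strong_induction_on with
    | _ k IH =>
      match k with
      | 0 => exact h0
      | (m + 1) =>
        intro hk
        have hm : m < n := Nat.lt_of_succ_lt hk
        have hrow := congrFun hw ⟨m, hm⟩
        rw [Matrix.mulVec, dotProduct] at hrow
        have hwm : w ⟨m, hm⟩ = 0 := IH m (Nat.lt_succ_self m) hm
        have hsum : ∑ j, M ⟨m, hm⟩ j * w j = M ⟨m, hm⟩ ⟨m + 1, hk⟩ * w ⟨m + 1, hk⟩ := by
          refine Finset.sum_eq_single _ ?_ (by simp)
          intro j _ hj
          have hjv : (j : ℕ) ≠ m + 1 := fun h => hj (Fin.ext h)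
          by_cases hlt : 1 < ((m : ℤ) - (j : ℤ)).natAbs
          · rw [htri ⟨m, hm⟩ j hlt, zero_mul]
          · have hle : (j : ℕ) ≤ m := by omega
            have : w j = 0 := by
              have := IH j (Nat.lt_succ_of_le hle) j.isLt
              simpa using this
            rw [this, mul_zero]
        rw [hsum] at hrow
        rw [Pi.smul_apply, hwm, smul_zero] at hrow
        exact (mul_eq_zero.mp hrow).resolve_left (hsup m hk)
  funext j
  simpa using key j.1 j.2

/-- The diagonal scaling factors turning a tridiagonal matrix with positive
off-diagonal products into a symmetric one. -/
private noncomputable def triD (n : ℕ) (T : Matrix (Fin n) (Fin n) ℝ) : ℕ → ℝ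
  | 0 => 1
  | (k + 1) => triD n T k *
      Real.sqrt (if h : k + 1 < n then
        T ⟨k, Nat.lt_of_succ_lt h⟩ ⟨k + 1, h⟩ / T ⟨k + 1, h⟩ ⟨k, Nat.lt_of_succ_lt h⟩ else 1)

/-- A real tridiagonal matrix whose products of corresponding off-diagonal
entries are positive has `n` distinct real eigenvalues: its characteristic
polynomial over `ℂ` splits into distinct real linear factors. -/
theorem tridiagonal_real_simple_spectrum (n : ℕ) (hn : 1 ≤ n)
    (T : Matrix (Fin n) (Fin n) ℝ)
    (htri : ∀ i j : Fin n, 1 < ((i : ℤ) - (j : ℤ)).natAbs → T i j = 0)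
    (hbc : ∀ (i : Fin n) (h : (i : ℕ) + 1 < n),
      0 < T i ⟨(i : ℕ) + 1, h⟩ * T ⟨(i : ℕ) + 1, h⟩ i) :
    ∃ l : Fin n → ℝ, Function.Injective l ∧
      Matrix.charpoly (T.map (Complex.ofReal ·)) =
        ∏ i : Fin n, (X - C ((l i : ℝ) : ℂ)) := by
  classical
  -- abbreviations for super/sub-diagonal entries
  have hbc' : ∀ (k : ℕ) (h : k + 1 < n),
      0 < T ⟨k, Nat.lt_of_succ_lt h⟩ ⟨k + 1, h⟩ * T ⟨k + 1, h⟩ ⟨k, Nat.lt_of_succ_lt h⟩ := by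
    intro k h
    exact hbc ⟨k, Nat.lt_of_succ_lt h⟩ h
  have hbne : ∀ (k : ℕ) (h : k + 1 < n), T ⟨k, Nat.lt_of_succ_lt h⟩ ⟨k + 1, h⟩ ≠ 0 := by
    intro k h hb
    have := hbc' k h
    rw [hb, zero_mul] at this
    exact lt_irrefl 0 this
  have hcne : ∀ (k : ℕ) (h : k + 1 < n), T ⟨k + 1, h⟩ ⟨k, Nat.lt_of_succ_lt h⟩ ≠ 0 := by
    intro k h hc
    have := hbc' k h
    rw [hc, mul_zero] at this
    exact lt_irrefl 0 this
  have hratio : ∀ (k : ℕ) (h : k + 1 < n),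
      0 < T ⟨k, Nat.lt_of_succ_lt h⟩ ⟨k + 1, h⟩ / T ⟨k + 1, h⟩ ⟨k, Nat.lt_of_succ_lt h⟩ := by
    intro k h
    set b := T ⟨k, Nat.lt_of_succ_lt h⟩ ⟨k + 1, h⟩
    set c := T ⟨k + 1, h⟩ ⟨k, Nat.lt_of_succ_lt h⟩
    have hc := hcne k h
    have hcsq : 0 < c ^ 2 := by positivity
    have : b / c = (b * c) / c ^ 2 := by field_simp
    rw [this]
    exact div_pos (hbc' k h) hcsq
  -- the diagonal scaling
  set d : ℕ → ℝ := triD n T with hd_def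
  have hdpos : ∀ k, 0 < d k := by
    intro k
    induction k with
    | zero => exact one_pos
    | succ m ih =>
      have hpos : (0:ℝ) < Real.sqrt (if h : m + 1 < n then
          T ⟨m, Nat.lt_of_succ_lt h⟩ ⟨m + 1, h⟩ / T ⟨m + 1, h⟩ ⟨m, Nat.lt_of_succ_lt h⟩ else 1) := by
        apply Real.sqrt_pos.mpr
        by_cases h : m + 1 < n
        · rw [dif_pos h]; exact hratio m h
        · rw [dif_neg h]; exact one_pos
      exact mul_pos ih hpos
  have hdne : ∀ k, d k ≠ 0 := fun k => ne_of_gt (hdpos k)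
  -- key symmetry relation for adjacent entries
  have hadj : ∀ (k : ℕ) (h : k + 1 < n),
      d (k + 1) * T ⟨k + 1, h⟩ ⟨k, Nat.lt_of_succ_lt h⟩ * (d k)⁻¹ =
      d k * T ⟨k, Nat.lt_of_succ_lt h⟩ ⟨k + 1, h⟩ * (d (k + 1))⁻¹ := by
    intro k h
    set b := T ⟨k, Nat.lt_of_succ_lt h⟩ ⟨k + 1, h⟩ with hb_def
    set c := T ⟨k + 1, h⟩ ⟨k, Nat.lt_of_succ_lt h⟩ with hc_def
    have hcne' : c ≠ 0 := hcne k h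
    set s : ℝ := Real.sqrt (b / c) with hs_def
    have hds : d (k + 1) = d k * s := by
      show triD n T (k + 1) = d k * s
      rw [triD, dif_pos h]
    have hspos : 0 < s := Real.sqrt_pos.mpr (hratio k h)
    have hs2 : s ^ 2 = b / c := Real.sq_sqrt (le_of_lt (hratio k h))
    have hbeq : b = s ^ 2 * c := by
      rw [hs2, div_mul_cancel₀ _ hcne']
    rw [hds, hbeq]
    have hdk := hdne k
    have hsne := ne_of_gt hspos
    field_simp
  -- the symmetrized matrix
  set dv : Fin n → ℝ := fun i => d i.1 with hdv_def
  set dinv : Fin n → ℝ := fun i => (d i.1)⁻¹ with hdinv_def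
  set S : Matrix (Fin n) (Fin n) ℝ :=
    Matrix.diagonal dv * T * Matrix.diagonal dinv with hS_def
  have hDD : Matrix.diagonal dv * Matrix.diagonal dinv = 1 := by
    rw [Matrix.diagonal_mul_diagonal]
    have : (fun i => dv i * dinv i) = fun _ : Fin n => (1:ℝ) := by
      funext i
      exact mul_inv_cancel₀ (hdne i.1)
    rw [this, Matrix.diagonal_one]
  have hent : ∀ i j, S i j = d i.1 * T i j * (d j.1)⁻¹ := by
    intro i j
    rw [hS_def, Matrix.mul_diagonal, Matrix.diagonal_mul]
  -- S is tridiagonal with nonzero superdiagonal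
  have hStri : ∀ i j : Fin n, 1 < ((i : ℤ) - (j : ℤ)).natAbs → S i j = 0 := by
    intro i j hij
    rw [hent, htri i j hij, mul_zero, zero_mul]
  have hSsup : ∀ (k : ℕ) (h : k + 1 < n),
      S ⟨k, Nat.lt_of_succ_lt h⟩ ⟨k + 1, h⟩ ≠ 0 := by
    intro k h
    rw [hent]
    exact mul_ne_zero (mul_ne_zero (hdne k) (hbne k h)) (inv_ne_zero (hdne (k + 1)))
  -- S is symmetric
  have hS : S.IsHermitian := by
    rw [Matrix.IsHermitian]
    ext i j
    rw [Matrix.conjTranspose_apply, star_trivial]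
    rw [hent, hent]
    rcases lt_trichotomy (i : ℕ) (j : ℕ) with hlt | heq | hgt
    · by_cases hadj1 : (j : ℕ) = (i : ℕ) + 1
      · have hj : j = ⟨(i : ℕ) + 1, hadj1 ▸ j.2⟩ := Fin.ext hadj1
        have hi : i = ⟨(i : ℕ), i.2⟩ := Fin.ext rfl
        rw [hj]
        have := hadj (i : ℕ) (hadj1 ▸ j.2)
        simpa using this
      · have h1 : 1 < ((j : ℤ) - (i : ℤ)).natAbs := by omega
        have h2 : 1 < ((i : ℤ) - (j : ℤ)).natAbs := by omega
        rw [htri j i h1, htri i j h2, mul_zero, zero_mul, mul_zero, zero_mul]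
    · have : i = j := Fin.ext heq
      subst this; rfl
    · by_cases hadj1 : (i : ℕ) = (j : ℕ) + 1
      · have hi : i = ⟨(j : ℕ) + 1, hadj1 ▸ i.2⟩ := Fin.ext hadj1
        rw [hi]
        have := (hadj (j : ℕ) (hadj1 ▸ i.2)).symm
        simpa using this
      · have h1 : 1 < ((j : ℤ) - (i : ℤ)).natAbs := by omega
        have h2 : 1 < ((i : ℤ) - (j : ℤ)).natAbs := by omega
        rw [htri j i h1, htri i j h2, mul_zero, zero_mul, mul_zero, zero_mul]
  -- eigenvalues
  set l : Fin n → ℝ := hS.eigenvalues with hl_def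
  -- charpoly of S over ℝ
  have hcpS : S.charpoly = ∏ i, (X - C (l i)) := by
    have hspec := hS.spectral_theorem
    have hU := (Matrix.mem_unitaryGroup_iff).mp hS.eigenvectorUnitary.2
    have hcomp : (RCLike.ofReal ∘ hS.eigenvalues : Fin n → ℝ) = l := by
      funext k; simp [hl_def]
    calc S.charpoly
        = ((hS.eigenvectorUnitary : Matrix (Fin n) (Fin n) ℝ) *
            Matrix.diagonal (RCLike.ofReal ∘ hS.eigenvalues) *
            (star (hS.eigenvectorUnitary : Matrix (Fin n) (Fin n) ℝ))).charpoly := by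
          exact congrArg _ (hspec.trans (Unitary.conjStarAlgAut_apply _ _))
      _ = (Matrix.diagonal (RCLike.ofReal ∘ hS.eigenvalues)).charpoly :=
          my_charpoly_conj _ _ _ hU
      _ = ∏ i, (X - C (l i)) := by rw [hcomp, my_charpoly_diagonal]
  -- charpoly of T over ℝ
  have hcpT : T.charpoly = ∏ i, (X - C (l i)) := by
    rw [← hcpS, hS_def]
    exact (my_charpoly_conj _ _ _ hDD).symm
  refine ⟨l, ?_, ?_⟩
  · -- injectivity of eigenvalues
    intro i j hij
    by_contra hne
    set u : Fin n → ℝ := ⇑(hS.eigenvectorBasis i) with hu_def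
    set v : Fin n → ℝ := ⇑(hS.eigenvectorBasis j) with hv_def
    have hSu : Matrix.mulVec S u = l i • u := hS.mulVec_eigenvectorBasis i
    have hSv : Matrix.mulVec S v = l i • v := by
      rw [hij]; exact hS.mulVec_eigenvectorBasis j
    have hon := hS.eigenvectorBasis.orthonormal
    rw [orthonormal_iff_ite] at hon
    have hone_i : ∑ k, u k * u k = 1 := by
      have h := hon i i
      simp only [PiLp.inner_apply, RCLike.inner_apply, starRingEnd_apply, star_trivial,
        if_pos rfl] at h
      exact h
    have hone_j : ∑ k, v k * v k = 1 := by
      have h := hon j j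
      simp only [PiLp.inner_apply, RCLike.inner_apply, starRingEnd_apply, star_trivial,
        if_pos rfl] at h
      exact h
    have hzero_uv : ∑ k, u k * v k = 0 := by
      have h := hon i j
      simp only [PiLp.inner_apply, RCLike.inner_apply, starRingEnd_apply, star_trivial,
        if_neg hne] at h
      rw [← h]; exact Finset.sum_congr rfl fun k _ => mul_comm _ _
    have h0n : 0 < n := hn
    set u0 : ℝ := u ⟨0, h0n⟩ with hu0_def
    set v0 : ℝ := v ⟨0, h0n⟩ with hv0_def
    have hwzero : v0 • u - u0 • v = 0 := by
      apply tridiag_eigvec_unique S hStri hSsup (l i)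
      · rw [Matrix.mulVec_sub, Matrix.mulVec_smul, Matrix.mulVec_smul, hSu, hSv,
          smul_sub, smul_comm (l i) v0, smul_comm (l i) u0]
      · intro h
        simp only [Pi.sub_apply, Pi.smul_apply, smul_eq_mul]
        rw [← hu0_def, ← hv0_def]
        ring
    have hptw : ∀ k, v0 * u k = u0 * v k := by
      intro k
      have := congrFun hwzero k
      simp only [Pi.sub_apply, Pi.smul_apply, Pi.zero_apply, smul_eq_mul] at this
      linarith
    have hv0 : v0 = 0 := by
      have e1 : v0 * ∑ k, u k * u k = ∑ k, (v0 * u k) * u k := by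
        rw [Finset.mul_sum]; exact Finset.sum_congr rfl fun k _ => by ring
      have e2 : ∑ k, (v0 * u k) * u k = ∑ k, (u0 * v k) * u k :=
        Finset.sum_congr rfl fun k _ => by rw [hptw k]
      have e3 : ∑ k, (u0 * v k) * u k = u0 * ∑ k, u k * v k := by
        rw [Finset.mul_sum]; exact Finset.sum_congr rfl fun k _ => by ring
      have h := e1.trans (e2.trans e3)
      rw [hone_i, hzero_uv, mul_one, mul_zero] at h
      exact h
    have hu0 : u0 = 0 := by
      have e1 : u0 * ∑ k, v k * v k = ∑ k, (u0 * v k) * v k := by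
        rw [Finset.mul_sum]; exact Finset.sum_congr rfl fun k _ => by ring
      have e2 : ∑ k, (u0 * v k) * v k = ∑ k, (v0 * u k) * v k :=
        Finset.sum_congr rfl fun k _ => by rw [hptw k]
      have e3 : ∑ k, (v0 * u k) * v k = v0 * ∑ k, u k * v k := by
        rw [Finset.mul_sum]; exact Finset.sum_congr rfl fun k _ => by ring
      have h := e1.trans (e2.trans e3)
      rw [hone_j, hzero_uv, mul_one, mul_zero] at h
      exact h
    have hu_zero : u = 0 := by
      apply tridiag_eigvec_unique S hStri hSsup (l i) u hSu
      intro h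
      exact hu0
    have hcontr : (1:ℝ) = 0 := by
      rw [← hone_i, hu_zero]
      simp
    norm_num at hcontr
  · -- charpoly over ℂ
    have hmap : (T.map (Complex.ofReal ·)).charpoly = T.charpoly.map Complex.ofRealHom :=
      Matrix.charpoly_map T Complex.ofRealHom
    rw [hmap, hcpT, Polynomial.map_prod]
    refine Finset.prod_congr rfl fun k _ => ?_
    rw [Polynomial.map_sub, Polynomial.map_X, Polynomial.map_C]
    rfl
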